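/- arXiv:0909.1472 — 2 statements merged into one kernel-verified Lean document; each statement's English description precedes it below -/
import Mathlib

section
/- Let M_1 = 1 and let M_2, M_3, … be i.i.d. marks with P(M_l = m) = w_m/ℓ_n for m ∈ [n], and let J_j = 1{M_j ∉ {1} ∪ {M_2,…,M_{j-1}}}. Then for every m ≥ 1, E[Σ_{j=2}^m (1 - J_j)] ≤ m w_1/ℓ_n + m(m-1) ν_n/(2 ℓ_n), where ν_n = Σ_{j∈[n]} w_j²/ℓ_n. -/
open MeasureTheory ProbabilityTheory Filter Set Real
open scoped ENNReal Topology Classical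

private lemma gauss_aux (m : ℕ) : ∑ j ∈ Finset.Icc 2 m, ((j : ℝ) - 2) ≤ m * (m - 1) / 2 := by
  induction m with
  | zero => simp
  | succ k ih =>
    by_cases hk : 2 ≤ k + 1
    · rw [Finset.sum_Icc_succ_top hk]
      push_cast
      have hk' : (1 : ℝ) ≤ k := by
        have : 1 ≤ k := by omega
        exact_mod_cast this
      nlinarith [ih]
    · have : k = 0 := by omega
      subst this; simp

/-- with `M_1 = 1` and `(M_j)_{j≥2}` i.i.d. marks with
`P(M=m)=w_m/ℓ_n`, and `J_j = 1{M_j ∉ {1} ∪ {M_2,…,M_{j-1}}}`, for every `m ≥ 1`,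
`E[Σ_{j=2}^m (1-J_j)] ≤ m w_1/ℓ_n + m(m-1)ν_n/(2ℓ_n)` with `ν_n = Σ w_j²/ℓ_n`. -/
theorem stmt6 {Ω : Type*} [MeasurableSpace Ω] (μ : Measure Ω) [IsProbabilityMeasure μ]
    (n : ℕ) (hn : 1 ≤ n) (w : ℕ → ℝ) (hw : ∀ j ∈ Finset.Icc 1 n, 0 < w j)
    (ℓ ν : ℝ) (hℓ : ℓ = ∑ j ∈ Finset.Icc 1 n, w j)
    (hν : ν = ∑ j ∈ Finset.Icc 1 n, (w j) ^ 2 / ℓ)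
    (M : ℕ → Ω → ℕ)
    (hM1 : ∀ ω, M 1 ω = 1)
    (hmeas : ∀ l, Measurable (M l))
    (hrange : ∀ l ω, M l ω ∈ Finset.Icc 1 n)
    (hindep : iIndepFun (fun l : ℕ => M (l + 2)) μ)
    (hdist : ∀ l : ℕ, 2 ≤ l → ∀ m ∈ Finset.Icc 1 n,
      μ {ω | M l ω = m} = ENNReal.ofReal (w m / ℓ)) :
    let J : ℕ → Ω → ℝ := fun j ω =>
      if (M j ω ≠ 1 ∧ ∀ i ∈ Finset.Icc 2 (j - 1), M i ω ≠ M j ω) then 1 else 0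
    ∀ m : ℕ, 1 ≤ m →
      (∫ ω, (∑ j ∈ Finset.Icc 2 m, (1 - J j ω)) ∂μ) ≤
        m * w 1 / ℓ + m * (m - 1) * ν / (2 * ℓ) := by
  intro J m hm
  have h1n : (1 : ℕ) ∈ Finset.Icc 1 n := by simp [hn]
  have hℓpos : 0 < ℓ := by
    rw [hℓ]; exact Finset.sum_pos hw ⟨1, h1n⟩
  have hw1 : 0 < w 1 := hw 1 h1n
  have hνnn : 0 ≤ ν := by
    rw [hν]; exact Finset.sum_nonneg fun j hj => by positivity
  -- the "bad" set
  set S : ℕ → Set Ω := fun j =>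
    {ω | M j ω = 1} ∪ ⋃ i ∈ Finset.Icc 2 (j - 1), {ω | M i ω = M j ω} with hS
  have hSm : ∀ j, MeasurableSet (S j) := by
    intro j
    refine MeasurableSet.union ((hmeas j) (measurableSet_singleton 1)) ?_
    exact MeasurableSet.biUnion (Finset.Icc 2 (j - 1)).countable_toSet
      fun i _ => measurableSet_eq_fun (hmeas i) (hmeas j)
  have hind : ∀ j, (fun ω => 1 - J j ω) = (S j).indicator (fun _ => (1 : ℝ)) := by
    intro j
    funext ω
    by_cases h : (M j ω ≠ 1 ∧ ∀ i ∈ Finset.Icc 2 (j - 1), M i ω ≠ M j ω)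
    · have hω : ω ∉ S j := by
        simp only [hS, Set.mem_union, Set.mem_setOf_eq, Set.mem_iUnion, not_or, not_exists]
        exact ⟨h.1, fun i hi => fun hmem => h.2 i hi hmem⟩
      rw [Set.indicator_of_notMem hω]
      simp only [J]
      rw [if_pos h]
      ring
    · have hω : ω ∈ S j := by
        by_cases h1 : M j ω = 1
        · exact Or.inl h1
        · have hex : ¬ ∀ i ∈ Finset.Icc 2 (j - 1), M i ω ≠ M j ω := fun hall => h ⟨h1, hall⟩
          push_neg at hex
          obtain ⟨i, hi, hieq⟩ := hex
          exact Or.inr (Set.mem_biUnion hi hieq)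
      rw [Set.indicator_of_mem hω]
      simp only [J]
      rw [if_neg h]
      ring
  -- integrability and integral identity
  have hInt : ∀ j, Integrable (fun ω => 1 - J j ω) μ := by
    intro j; rw [hind j]; exact (integrable_const (1 : ℝ)).indicator (hSm j)
  have hIeq : ∀ j, (∫ ω, (1 - J j ω) ∂μ) = (μ (S j)).toReal := by
    intro j
    rw [hind j, integral_indicator_const (1 : ℝ) (hSm j)]
    simp [measureReal_def]
  -- key per-j bound
  have hkey : ∀ j ∈ Finset.Icc 2 m, (μ (S j)).toReal ≤ w 1 / ℓ + ((j : ℝ) - 2) * (ν / ℓ) := by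
    intro j hj
    have hj2 : 2 ≤ j := (Finset.mem_Icc.mp hj).1
    -- bound the pair-collision probability
    have hpair : ∀ i ∈ Finset.Icc 2 (j - 1),
        μ {ω | M i ω = M j ω} ≤ ENNReal.ofReal (ν / ℓ) := by
      intro i hi
      have hi2 : 2 ≤ i := (Finset.mem_Icc.mp hi).1
      have hij : i ≠ j := by
        have := (Finset.mem_Icc.mp hi).2; omega
      have hIF : IndepFun (M i) (M j) μ := by
        have h1 : i - 2 + 2 = i := Nat.sub_add_cancel hi2
        have h2 : j - 2 + 2 = j := Nat.sub_add_cancel hj2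
        have hne : i - 2 ≠ j - 2 := by omega
        have := hindep.indepFun (i := i - 2) (j := j - 2) hne
        rwa [h1, h2] at this
      have hsub : {ω | M i ω = M j ω} ⊆
          ⋃ m' ∈ (Finset.Icc 1 n : Finset ℕ), ({ω | M i ω = m'} ∩ {ω | M j ω = m'}) := by
        intro ω hω
        simp only [Set.mem_iUnion]
        exact ⟨M j ω, hrange j ω, hω, rfl⟩
      calc μ {ω | M i ω = M j ω}
          ≤ μ (⋃ m' ∈ (Finset.Icc 1 n : Finset ℕ),
              ({ω | M i ω = m'} ∩ {ω | M j ω = m'})) := measure_mono hsub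
        _ ≤ ∑ m' ∈ Finset.Icc 1 n, μ ({ω | M i ω = m'} ∩ {ω | M j ω = m'}) :=
            measure_biUnion_finset_le _ _
        _ = ∑ m' ∈ Finset.Icc 1 n, ENNReal.ofReal ((w m') ^ 2 / ℓ ^ 2) := by
            refine Finset.sum_congr rfl fun m' hm' => ?_
            have := hIF.measure_inter_preimage_eq_mul {m'} {m'}
              (measurableSet_singleton m') (measurableSet_singleton m')
            have heq : μ ({ω | M i ω = m'} ∩ {ω | M j ω = m'}) =
                μ {ω | M i ω = m'} * μ {ω | M j ω = m'} := by
              simpa [Set.preimage, Set.mem_singleton_iff] using this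
            rw [heq, hdist i hi2 m' hm', hdist j hj2 m' hm',
              ← ENNReal.ofReal_mul (div_nonneg (hw m' hm').le hℓpos.le)]
            exact congrArg ENNReal.ofReal (by ring)
        _ = ENNReal.ofReal (∑ m' ∈ Finset.Icc 1 n, (w m') ^ 2 / ℓ ^ 2) := by
            rw [ENNReal.ofReal_sum_of_nonneg fun m' hm' => by positivity]
        _ = ENNReal.ofReal (ν / ℓ) := by
            congr 1
            rw [hν, Finset.sum_div]
            exact Finset.sum_congr rfl fun m' _ => by rw [div_div]; ring
    have hbound : μ (S j) ≤ ENNReal.ofReal (w 1 / ℓ + ((j : ℝ) - 2) * (ν / ℓ)) := by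
      calc μ (S j) ≤ μ {ω | M j ω = 1} +
            μ (⋃ i ∈ Finset.Icc 2 (j - 1), {ω | M i ω = M j ω}) := measure_union_le _ _
        _ ≤ ENNReal.ofReal (w 1 / ℓ) +
            ∑ i ∈ Finset.Icc 2 (j - 1), μ {ω | M i ω = M j ω} := by
            gcongr
            · exact (hdist j hj2 1 h1n).le
            · exact measure_biUnion_finset_le _ _
        _ ≤ ENNReal.ofReal (w 1 / ℓ) +
            ∑ _i ∈ Finset.Icc 2 (j - 1), ENNReal.ofReal (ν / ℓ) := by
            gcongr with i hi
            exact hpair i hi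
        _ = ENNReal.ofReal (w 1 / ℓ) + (j - 2) • ENNReal.ofReal (ν / ℓ) := by
            have hc : j - 1 + 1 - 2 = j - 2 := by omega
            rw [Finset.sum_const, Nat.card_Icc, hc]
        _ = ENNReal.ofReal (w 1 / ℓ + ((j : ℝ) - 2) * (ν / ℓ)) := by
            rw [nsmul_eq_mul, ← ENNReal.ofReal_natCast,
              ← ENNReal.ofReal_mul (Nat.cast_nonneg _),
              ← ENNReal.ofReal_add (div_nonneg hw1.le hℓpos.le)
                (mul_nonneg (Nat.cast_nonneg _) (div_nonneg hνnn hℓpos.le))]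
            congr 2
            have : ((j - 2 : ℕ) : ℝ) = (j : ℝ) - 2 := by
              push_cast [Nat.cast_sub hj2]; ring
            rw [this]
    have hj2' : (0 : ℝ) ≤ (j : ℝ) - 2 := by
      have : (2 : ℝ) ≤ (j : ℝ) := by exact_mod_cast hj2
      linarith
    exact ENNReal.toReal_le_of_le_ofReal
      (add_nonneg (div_nonneg hw1.le hℓpos.le)
        (mul_nonneg hj2' (div_nonneg hνnn hℓpos.le))) hbound
  -- put things together
  rw [integral_finset_sum _ fun j _ => hInt j]
  have hle1 : ∑ j ∈ Finset.Icc 2 m, (∫ ω, (1 - J j ω) ∂μ) ≤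
      ∑ j ∈ Finset.Icc 2 m, (w 1 / ℓ + ((j : ℝ) - 2) * (ν / ℓ)) := by
    refine Finset.sum_le_sum fun j hj => ?_
    rw [hIeq j]; exact hkey j hj
  refine hle1.trans ?_
  rw [Finset.sum_add_distrib, Finset.sum_const, ← Finset.sum_mul, Nat.card_Icc]
  have hcard : ((m + 1 - 2 : ℕ) : ℝ) ≤ (m : ℝ) := by
    have : m + 1 - 2 ≤ m := by omega
    exact_mod_cast this
  have hgauss := gauss_aux m
  have h1 : (m + 1 - 2) • (w 1 / ℓ) ≤ (m : ℝ) * w 1 / ℓ := by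
    rw [nsmul_eq_mul]
    have heq : (m : ℝ) * w 1 / ℓ = (m : ℝ) * (w 1 / ℓ) := by ring
    rw [heq]
    exact mul_le_mul_of_nonneg_right hcard (div_nonneg hw1.le hℓpos.le)
  have h2 : (∑ j ∈ Finset.Icc 2 m, ((j : ℝ) - 2)) * (ν / ℓ) ≤ m * (m - 1) * ν / (2 * ℓ) := by
    have hm1 : (1 : ℝ) ≤ m := by exact_mod_cast hm
    have hνℓ : 0 ≤ ν / ℓ := by positivity
    calc (∑ j ∈ Finset.Icc 2 m, ((j : ℝ) - 2)) * (ν / ℓ)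
        ≤ (m * (m - 1) / 2) * (ν / ℓ) := by
          apply mul_le_mul_of_nonneg_right hgauss hνℓ
      _ = m * (m - 1) * ν / (2 * ℓ) := by
          field_simp
  exact add_le_add h1 h2
end

section
/- Let G be an inhomogeneous random graph on vertex set [n] with independent edges, where edge {i,j} is present with probability p_{ij} = 1 − exp(−w_i w_j/ℓ_n), ℓ_n = Σ_i w_i. For a vertex v, let C(v) be its connected component and W(v) = Σ_{u ∈ C(v)} w_u its weight. Then for any two distinct vertices i, j ∈ [n], E[W(i) W(j) 1{i and j are in different components}] ≤ E[W(i)] · E[W(j)]. -/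
open MeasureTheory ProbabilityTheory Filter Set Real
open scoped ENNReal Topology Classical

namespace Stmt10Aux

abbrev EI (n : ℕ) := {p : Fin n × Fin n // p.1 < p.2}

def Dg {n : ℕ} (T : EI n → Prop) (g : EI n → Bool) : SimpleGraph (Fin n) where
  Adj a b := (∃ h : a < b, T ⟨(a,b),h⟩ ∧ g ⟨(a,b),h⟩ = true) ∨
             (∃ h : b < a, T ⟨(b,a),h⟩ ∧ g ⟨(b,a),h⟩ = true)
  symm := by constructor; intro a b h; exact h.symm
  loopless := by constructor; rintro a (⟨h,_⟩|⟨h,_⟩) <;> exact absurd h (lt_irrefl a)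

def fullG {n : ℕ} (g : EI n → Bool) : SimpleGraph (Fin n) := Dg (fun _ => True) g

def restrG {n : ℕ} (S : Finset (Fin n)) (g : EI n → Bool) : SimpleGraph (Fin n) :=
  Dg (fun p => p.1.1 ∉ S ∧ p.1.2 ∉ S) g

lemma restr_le {n : ℕ} (S : Finset (Fin n)) (g : EI n → Bool) : restrG S g ≤ fullG g := by
  intro a b h
  exact h.imp (fun ⟨h1,_,h3⟩ => ⟨h1, trivial, h3⟩) (fun ⟨h1,_,h3⟩ => ⟨h1, trivial, h3⟩)

lemma gen_reach {n : ℕ} {H K : SimpleGraph (Fin n)} {P : Fin n → Prop}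
    (hP : ∀ a b, P a → H.Adj a b → P b)
    (hedge : ∀ a b, P a → P b → H.Adj a b → K.Adj a b)
    {a u : Fin n} (hr : H.Reachable a u) (ha : P a) : K.Reachable a u := by
  obtain ⟨p⟩ := hr
  induction p with
  | nil => exact SimpleGraph.Reachable.refl _
  | @cons a b u h q ih =>
    have hb := hP _ _ ha h
    exact ((hedge _ _ ha hb h).reachable).trans (ih hb)

lemma reach_restr_iff {n : ℕ} {S : Finset (Fin n)} {g : EI n → Bool} {i j : Fin n}
    (hS : ∀ u, (fullG g).Reachable i u ↔ u ∈ S) (hj : j ∉ S) (u : Fin n) :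
    (fullG g).Reachable j u ↔ (restrG S g).Reachable j u := by
  have hav : ∀ v, (fullG g).Reachable j v → v ∉ S := by
    intro v hv hvS
    exact hj ((hS j).mp (((hS v).mpr hvS).trans hv.symm))
  constructor
  · intro hr
    refine gen_reach (P := fun v => (fullG g).Reachable j v)
      (fun a b ha h => ha.trans h.reachable)
      (fun a b ha hb h => ?_) hr (SimpleGraph.Reachable.refl _)
    exact h.imp (fun ⟨h1,_,h3⟩ => ⟨h1, ⟨hav _ ha, hav _ hb⟩, h3⟩)
      (fun ⟨h1,_,h3⟩ => ⟨h1, ⟨hav _ hb, hav _ ha⟩, h3⟩)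
  · exact fun hr => hr.mono (restr_le S g)

lemma adj_agree {n : ℕ} {S : Finset (Fin n)} {g g' : EI n → Bool}
    (hagree : ∀ p : EI n, (p.1.1 ∈ S ∨ p.1.2 ∈ S) → g p = g' p)
    {a b : Fin n} (ha : a ∈ S) : (fullG g).Adj a b ↔ (fullG g').Adj a b := by
  unfold fullG Dg
  simp only
  constructor
  · rintro (⟨h1,-,h3⟩|⟨h1,-,h3⟩)
    · exact Or.inl ⟨h1, trivial, (hagree ⟨(a,b),h1⟩ (Or.inl ha)).symm.trans h3⟩
    · exact Or.inr ⟨h1, trivial, (hagree ⟨(b,a),h1⟩ (Or.inr ha)).symm.trans h3⟩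
  · rintro (⟨h1,-,h3⟩|⟨h1,-,h3⟩)
    · exact Or.inl ⟨h1, trivial, (hagree ⟨(a,b),h1⟩ (Or.inl ha)).trans h3⟩
    · exact Or.inr ⟨h1, trivial, (hagree ⟨(b,a),h1⟩ (Or.inr ha)).trans h3⟩

lemma event_agree {n : ℕ} {S : Finset (Fin n)} {g g' : EI n → Bool} {i : Fin n}
    (hagree : ∀ p : EI n, (p.1.1 ∈ S ∨ p.1.2 ∈ S) → g p = g' p)
    (hS : ∀ u, (fullG g).Reachable i u ↔ u ∈ S) (u : Fin n) :
    (fullG g').Reachable i u ↔ u ∈ S := by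
  have hmem : ∀ v, (fullG g).Reachable i v → v ∈ S := fun v hv => (hS v).mp hv
  constructor
  · intro hr
    refine (hS u).mp (gen_reach (P := fun v => (fullG g).Reachable i v)
      (fun a b ha h => ha.trans ((adj_agree hagree (hmem a ha)).mpr h).reachable)
      (fun a b ha hb h => (adj_agree hagree (hmem a ha)).mpr h) hr
      (SimpleGraph.Reachable.refl _))
  · intro hu
    refine gen_reach (P := fun v => (fullG g).Reachable i v)
      (fun a b ha h => ha.trans h.reachable)
      (fun a b ha hb h => (adj_agree hagree (hmem a ha)).mp h) ((hS u).mpr hu)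
      (SimpleGraph.Reachable.refl _)

lemma restr_eq_of_agree {n : ℕ} {S : Finset (Fin n)} {g g' : EI n → Bool}
    (hagree : ∀ p : EI n, (p.1.1 ∉ S ∧ p.1.2 ∉ S) → g p = g' p) :
    restrG S g = restrG S g' := by
  ext a b
  unfold restrG Dg
  simp only
  constructor
  · rintro (⟨h1,h2,h3⟩|⟨h1,h2,h3⟩)
    · exact Or.inl ⟨h1, h2, (hagree _ h2).symm.trans h3⟩
    · exact Or.inr ⟨h1, h2, (hagree _ h2).symm.trans h3⟩
  · rintro (⟨h1,h2,h3⟩|⟨h1,h2,h3⟩)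
    · exact Or.inl ⟨h1, h2, (hagree _ h2).trans h3⟩
    · exact Or.inr ⟨h1, h2, (hagree _ h2).trans h3⟩

lemma meas_of_finite {α β : Type*} [MeasurableSpace α] [MeasurableSpace β] [Finite α]
    [MeasurableSingletonClass α] (f : α → β) : Measurable f :=
  fun _ _ => (Set.toFinite _).measurableSet

noncomputable def Wf {n : ℕ} (w : Fin n → ℝ) (v : Fin n) (g : EI n → Bool) : ℝ :=
  ∑ u, if (fullG g).Reachable v u then w u else 0

noncomputable def WRf {n : ℕ} (w : Fin n → ℝ) (S : Finset (Fin n)) (v : Fin n)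
    (g : EI n → Bool) : ℝ :=
  ∑ u, if (restrG S g).Reachable v u then w u else 0

noncomputable def indA {n : ℕ} (i : Fin n) (S : Finset (Fin n)) (g : EI n → Bool) : ℝ :=
  if (∀ u, (fullG g).Reachable i u ↔ u ∈ S) then 1 else 0

set_option maxHeartbeats 2000000 in
lemma main_aux {Ω : Type*} [MeasurableSpace Ω] (μ : Measure Ω) [IsProbabilityMeasure μ]
    (n : ℕ) (w : Fin n → ℝ) (hw : ∀ u, 0 ≤ w u)
    (F : Ω → EI n → Bool) (hF : Measurable F)
    (hindep : iIndepFun (fun (p : EI n) (ω : Ω) => F ω p) μ)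
    (i j : Fin n) (hij : i ≠ j) :
    (∫ ω, (Wf w i (F ω) * Wf w j (F ω) *
           (if ¬ (fullG (F ω)).Reachable i j then (1:ℝ) else 0)) ∂μ) ≤
    (∫ ω, Wf w i (F ω) ∂μ) * (∫ ω, Wf w j (F ω) ∂μ) := by
  set B : ℝ := ∑ u, w u with hB
  -- basic bounds
  have hWf_nonneg : ∀ v g, 0 ≤ Wf w v g := by
    intro v g; refine Finset.sum_nonneg fun u _ => ?_; split <;> simp [hw u]
  have hWf_le : ∀ v g, Wf w v g ≤ B := by
    intro v g; refine Finset.sum_le_sum fun u _ => ?_; split <;> simp [hw u]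
  have hWR_nonneg : ∀ S g, 0 ≤ WRf w S j g := by
    intro S g; refine Finset.sum_nonneg fun u _ => ?_; split <;> simp [hw u]
  have hWR_le_Wf : ∀ S g, WRf w S j g ≤ Wf w j g := by
    intro S g
    refine Finset.sum_le_sum fun u _ => ?_
    by_cases h : (restrG S g).Reachable j u
    · rw [if_pos h, if_pos (h.mono (restr_le S g))]
    · rw [if_neg h]; split <;> simp [hw u]
  have hWR_le : ∀ S g, WRf w S j g ≤ B := fun S g => (hWR_le_Wf S g).trans (hWf_le j g)
  have hind01 : ∀ S g, 0 ≤ indA i S g ∧ indA i S g ≤ 1 := by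
    intro S g; unfold indA; split <;> norm_num
  have hcS_nonneg : ∀ S : Finset (Fin n), 0 ≤ ∑ u ∈ S, w u :=
    fun S => Finset.sum_nonneg fun u _ => hw u
  have hcS_le : ∀ S : Finset (Fin n), (∑ u ∈ S, w u) ≤ B := by
    intro S
    exact Finset.sum_le_sum_of_subset_of_nonneg (Finset.subset_univ S) fun u _ _ => hw u
  -- integrability of bounded functions of F
  have hint : ∀ (φ : (EI n → Bool) → ℝ) (C : ℝ), (∀ g, |φ g| ≤ C) →
      Integrable (fun ω => φ (F ω)) μ := by
    intro φ C hC
    refine (integrable_const C).mono' ((meas_of_finite φ).comp hF).aestronglyMeasurable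
      (ae_of_all _ fun ω => ?_)
    simpa [Real.norm_eq_abs] using hC (F ω)
  have haesm : ∀ (φ : (EI n → Bool) → ℝ), AEStronglyMeasurable (fun ω => φ (F ω)) μ :=
    fun φ => ((meas_of_finite φ).comp hF).aestronglyMeasurable
  have hXm : ∀ p : EI n, Measurable (fun ω => F ω p) :=
    fun p => (measurable_pi_apply p).comp hF
  -- the family of candidate components
  set 𝒮 : Finset (Finset (Fin n)) := Finset.univ.filter (fun S => i ∈ S ∧ j ∉ S) with h𝒮
  -- independence of the component event and the restricted cluster weight
  have hd : ∀ S ∈ 𝒮, IndepFun (fun ω => indA i S (F ω)) (fun ω => WRf w S j (F ω)) μ := by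
    intro S hS
    set TS : Finset (EI n) := Finset.univ.filter (fun p => p.1.1 ∈ S ∨ p.1.2 ∈ S) with hTS
    set TC : Finset (EI n) := Finset.univ.filter (fun p => p.1.1 ∉ S ∧ p.1.2 ∉ S) with hTC
    have hdisj : Disjoint TS TC := by
      rw [Finset.disjoint_left]
      intro p hp hp'
      rw [hTS, Finset.mem_filter] at hp
      rw [hTC, Finset.mem_filter] at hp'
      tauto
    have base := hindep.indepFun_finset TS TC hdisj hXm
    set φ₁ : (TS → Bool) → ℝ :=
      fun g => indA i S (fun p => if h : p ∈ TS then g ⟨p, h⟩ else false) with hφ₁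
    set φ₂ : (TC → Bool) → ℝ :=
      fun g => WRf w S j (fun p => if h : p ∈ TC then g ⟨p, h⟩ else false) with hφ₂
    have h1 : (fun ω => indA i S (F ω)) = φ₁ ∘ (fun ω (p : TS) => F ω p) := by
      funext ω
      simp only [hφ₁, Function.comp]
      have hagree : ∀ p : EI n, (p.1.1 ∈ S ∨ p.1.2 ∈ S) →
          F ω p = (fun p => if h : p ∈ TS then F ω p else false) p := by
        intro p hp
        simp only
        rw [dif_pos (by rw [hTS, Finset.mem_filter]; exact ⟨Finset.mem_univ _, hp⟩)]
      unfold indA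
      exact if_congr ⟨fun h u => event_agree hagree h u,
        fun h u => event_agree (fun p hp => (hagree p hp).symm) h u⟩ rfl rfl
    have h2 : (fun ω => WRf w S j (F ω)) = φ₂ ∘ (fun ω (p : TC) => F ω p) := by
      funext ω
      simp only [hφ₂, Function.comp]
      have hagree : ∀ p : EI n, (p.1.1 ∉ S ∧ p.1.2 ∉ S) →
          F ω p = (fun p => if h : p ∈ TC then F ω p else false) p := by
        intro p hp
        simp only
        rw [dif_pos (by rw [hTC, Finset.mem_filter]; exact ⟨Finset.mem_univ _, hp⟩)]
      unfold WRf
      rw [restr_eq_of_agree hagree]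
    rw [h1, h2]
    exact base.comp (meas_of_finite φ₁) (meas_of_finite φ₂)
  -- pointwise decomposition
  have hkey : ∀ g : EI n → Bool,
      Wf w i g * Wf w j g * (if ¬ (fullG g).Reachable i j then (1:ℝ) else 0) =
      ∑ S ∈ 𝒮, (if (∀ u, (fullG g).Reachable i u ↔ u ∈ S)
        then (∑ u ∈ S, w u) * WRf w S j g else 0) := by
    intro g
    by_cases hr : (fullG g).Reachable i j
    · rw [if_neg (by simpa using hr), mul_zero]
      refine (Finset.sum_eq_zero fun S hS => ?_).symm
      rw [h𝒮, Finset.mem_filter] at hS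
      rw [if_neg]
      intro hA
      exact hS.2.2 ((hA j).mp hr)
    · set S0 : Finset (Fin n) := Finset.univ.filter (fun u => (fullG g).Reachable i u) with hS0d
      have hS0 : ∀ u, (fullG g).Reachable i u ↔ u ∈ S0 := by
        intro u; rw [hS0d, Finset.mem_filter]; simp
      have hS0mem : S0 ∈ 𝒮 := by
        rw [h𝒮, Finset.mem_filter]
        exact ⟨Finset.mem_univ _, (hS0 i).mp (SimpleGraph.Reachable.refl _),
          fun h => hr ((hS0 j).mpr h)⟩
      have hcollapse : ∀ S ∈ 𝒮,
          (if (∀ u, (fullG g).Reachable i u ↔ u ∈ S)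
            then (∑ u ∈ S, w u) * WRf w S j g else 0) =
          (if S = S0 then (∑ u ∈ S, w u) * WRf w S j g else 0) := by
        intro S hS
        refine if_congr ⟨fun hA => Finset.ext fun u => (hA u).symm.trans (hS0 u), ?_⟩ rfl rfl
        rintro rfl
        exact hS0
      rw [Finset.sum_congr rfl hcollapse, Finset.sum_ite_eq' 𝒮 S0
        (fun S => (∑ u ∈ S, w u) * WRf w S j g), if_pos hS0mem]
      have hWi : Wf w i g = ∑ u ∈ S0, w u := by
        unfold Wf
        rw [show (fun u => if (fullG g).Reachable i u then w u else 0)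
            = fun u => if u ∈ S0 then w u else 0 from funext fun u => if_congr (hS0 u) rfl rfl]
        rw [Finset.sum_ite_mem, Finset.univ_inter]
      have hWj : Wf w j g = WRf w S0 j g := by
        unfold Wf WRf
        exact Finset.sum_congr rfl fun u _ =>
          if_congr (reach_restr_iff hS0 (fun h => hr ((hS0 j).mpr h)) u) rfl rfl
      rw [if_pos (by simpa using hr), mul_one, hWi, hWj]
  -- if-term rewrite into product with indicator
  have hform : ∀ (S : Finset (Fin n)) (g : EI n → Bool),
      (if (∀ u, (fullG g).Reachable i u ↔ u ∈ S)
        then (∑ u ∈ S, w u) * WRf w S j g else 0) =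
      (∑ u ∈ S, w u) * (indA i S g * WRf w S j g) := by
    intro S g
    unfold indA
    split <;> ring
  -- integrability of summands
  have hint_term : ∀ S : Finset (Fin n),
      Integrable (fun ω => (∑ u ∈ S, w u) * (indA i S (F ω) * WRf w S j (F ω))) μ := by
    intro S
    refine hint (fun g => (∑ u ∈ S, w u) * (indA i S g * WRf w S j g)) (B * (1 * B)) fun g => ?_
    rw [abs_mul, abs_mul]
    refine mul_le_mul (by rw [abs_of_nonneg (hcS_nonneg S)]; exact hcS_le S)
      (mul_le_mul (by rw [abs_of_nonneg (hind01 S g).1]; exact (hind01 S g).2)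
        (by rw [abs_of_nonneg (hWR_nonneg S g)]; exact hWR_le S g)
        (abs_nonneg _) zero_le_one)
      (mul_nonneg (abs_nonneg _) (abs_nonneg _)) ((hcS_nonneg S).trans (hcS_le S))
  have hint_ind : ∀ S : Finset (Fin n), Integrable (fun ω => indA i S (F ω)) μ := by
    intro S
    refine hint (indA i S) 1 fun g => ?_
    rw [abs_of_nonneg (hind01 S g).1]; exact (hind01 S g).2
  have hint_WR : ∀ S : Finset (Fin n), Integrable (fun ω => WRf w S j (F ω)) μ := by
    intro S
    refine hint (WRf w S j) B fun g => ?_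
    rw [abs_of_nonneg (hWR_nonneg S g)]; exact hWR_le S g
  have hint_Wf : ∀ v : Fin n, Integrable (fun ω => Wf w v (F ω)) μ := by
    intro v
    refine hint (Wf w v) B fun g => ?_
    rw [abs_of_nonneg (hWf_nonneg v g)]; exact hWf_le v g
  -- nonnegativity of some integrals
  have hWjint_nonneg : 0 ≤ ∫ ω, Wf w j (F ω) ∂μ :=
    integral_nonneg fun ω => hWf_nonneg j (F ω)
  have hindint_nonneg : ∀ S, 0 ≤ ∫ ω, indA i S (F ω) ∂μ :=
    fun S => integral_nonneg fun ω => (hind01 S (F ω)).1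
  -- pointwise: ∑_S c_S ⋅ 1_{C(i)=S} ≤ Wf w i g, and nonneg
  have hptw0 : ∀ g, 0 ≤ ∑ S ∈ 𝒮, (∑ u ∈ S, w u) * indA i S g := by
    intro g
    exact Finset.sum_nonneg fun S _ => mul_nonneg (hcS_nonneg S) (hind01 S g).1
  have hptw : ∀ g, (∑ S ∈ 𝒮, (∑ u ∈ S, w u) * indA i S g) ≤ Wf w i g := by
    intro g
    by_cases hex : ∃ S, S ∈ 𝒮 ∧ (∀ u, (fullG g).Reachable i u ↔ u ∈ S)
    · obtain ⟨S1, hS1mem, hS1⟩ := hex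
      have hcollapse : ∀ S ∈ 𝒮, (∑ u ∈ S, w u) * indA i S g =
          (if S = S1 then (∑ u ∈ S, w u) else 0) := by
        intro S hS
        unfold indA
        rw [mul_ite, mul_one, mul_zero]
        exact if_congr ⟨fun hA => Finset.ext fun u => (hA u).symm.trans (hS1 u),
          by rintro rfl; exact hS1⟩ rfl rfl
      rw [Finset.sum_congr rfl hcollapse,
        Finset.sum_ite_eq' 𝒮 S1 (fun S => ∑ u ∈ S, w u), if_pos hS1mem]
      have hWi : Wf w i g = ∑ u ∈ S1, w u := by
        unfold Wf
        rw [show (fun u => if (fullG g).Reachable i u then w u else 0)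
            = fun u => if u ∈ S1 then w u else 0 from
            funext fun u => if_congr (hS1 u) rfl rfl]
        rw [Finset.sum_ite_mem, Finset.univ_inter]
      rw [hWi]
    · rw [Finset.sum_eq_zero]
      · exact hWf_nonneg i g
      · intro S hS
        unfold indA
        rw [if_neg (fun hA => hex ⟨S, hS, hA⟩), mul_zero]
  -- main chain
  calc
    (∫ ω, (Wf w i (F ω) * Wf w j (F ω) *
        (if ¬ (fullG (F ω)).Reachable i j then (1:ℝ) else 0)) ∂μ)
      = ∫ ω, ∑ S ∈ 𝒮, (∑ u ∈ S, w u) * (indA i S (F ω) * WRf w S j (F ω)) ∂μ := by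
        refine integral_congr_ae (ae_of_all _ fun ω => ?_)
        show Wf w i (F ω) * Wf w j (F ω) *
            (if ¬ (fullG (F ω)).Reachable i j then (1:ℝ) else 0) =
          ∑ S ∈ 𝒮, (∑ u ∈ S, w u) * (indA i S (F ω) * WRf w S j (F ω))
        rw [hkey (F ω)]
        exact Finset.sum_congr rfl fun S _ => hform S (F ω)
    _ = ∑ S ∈ 𝒮, ∫ ω, (∑ u ∈ S, w u) * (indA i S (F ω) * WRf w S j (F ω)) ∂μ :=
        integral_finset_sum 𝒮 fun S _ => hint_term S
    _ = ∑ S ∈ 𝒮, (∑ u ∈ S, w u) *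
          ((∫ ω, indA i S (F ω) ∂μ) * (∫ ω, WRf w S j (F ω) ∂μ)) := by
        refine Finset.sum_congr rfl fun S hS => ?_
        rw [integral_const_mul]
        congr 1
        exact (hd S hS).integral_fun_mul_eq_mul_integral (haesm (indA i S)) (haesm (WRf w S j))
    _ ≤ ∑ S ∈ 𝒮, (∑ u ∈ S, w u) *
          ((∫ ω, indA i S (F ω) ∂μ) * (∫ ω, Wf w j (F ω) ∂μ)) := by
        refine Finset.sum_le_sum fun S hS => ?_
        refine mul_le_mul_of_nonneg_left (mul_le_mul_of_nonneg_left ?_ (hindint_nonneg S))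
          (hcS_nonneg S)
        exact integral_mono (hint_WR S) (hint_Wf j) fun ω => hWR_le_Wf S (F ω)
    _ = (∑ S ∈ 𝒮, (∑ u ∈ S, w u) * ∫ ω, indA i S (F ω) ∂μ) * ∫ ω, Wf w j (F ω) ∂μ := by
        rw [Finset.sum_mul]
        exact Finset.sum_congr rfl fun S _ => by ring
    _ = (∫ ω, ∑ S ∈ 𝒮, (∑ u ∈ S, w u) * indA i S (F ω) ∂μ) * ∫ ω, Wf w j (F ω) ∂μ := by
        congr 1
        rw [integral_finset_sum]
        · exact Finset.sum_congr rfl fun S _ => (integral_const_mul _ _).symm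
        · intro S _
          refine hint (fun g => (∑ u ∈ S, w u) * indA i S g) (B * 1) fun g => ?_
          rw [abs_mul]
          exact mul_le_mul (by rw [abs_of_nonneg (hcS_nonneg S)]; exact hcS_le S)
            (by rw [abs_of_nonneg (hind01 S g).1]; exact (hind01 S g).2)
            (abs_nonneg _) ((hcS_nonneg S).trans (hcS_le S))
    _ ≤ (∫ ω, Wf w i (F ω) ∂μ) * ∫ ω, Wf w j (F ω) ∂μ := by
        refine mul_le_mul_of_nonneg_right ?_ hWjint_nonneg
        refine integral_mono ?_ (hint_Wf i) fun ω => hptw (F ω)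
        refine hint (fun g => ∑ S ∈ 𝒮, (∑ u ∈ S, w u) * indA i S g) B fun g => ?_
        rw [abs_of_nonneg (hptw0 g)]
        exact (hptw g).trans (hWf_le i g)

end Stmt10Aux

/-- in the rank-1 inhomogeneous random graph with independent edges
and `p_{ij} = 1 − exp(−w_i w_j/ℓ_n)`, for the cluster weights
`W(v) = Σ_{u ∈ C(v)} w_u`, any two distinct vertices `i ≠ j` satisfy
`E[W(i)W(j) 1{i ↮ j}] ≤ E[W(i)]·E[W(j)]` (a consequence of the BK inequality). -/
theorem stmt10 {Ω : Type*} [MeasurableSpace Ω] (μ : Measure Ω) [IsProbabilityMeasure μ]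
    (n : ℕ) (w : Fin n → ℝ) (hw : ∀ i, 0 < w i) (ℓ : ℝ) (hℓ : ℓ = ∑ i, w i)
    (G : Ω → SimpleGraph (Fin n))
    (hmeas : ∀ i j : Fin n, Measurable fun ω => (G ω).Adj i j)
    (hindep : iIndepFun
      (fun (p : {p : Fin n × Fin n // p.1 < p.2}) (ω : Ω) =>
        decide ((G ω).Adj p.1.1 p.1.2)) μ)
    (hprob : ∀ i j : Fin n, i ≠ j →
      μ {ω | (G ω).Adj i j} = ENNReal.ofReal (1 - Real.exp (-(w i * w j / ℓ)))) :
    ∀ i j : Fin n, i ≠ j →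
      (∫ ω, ((∑ u, if (G ω).Reachable i u then w u else 0) *
             (∑ u, if (G ω).Reachable j u then w u else 0) *
             (if ¬ (G ω).Reachable i j then (1:ℝ) else 0)) ∂μ) ≤
      (∫ ω, (∑ u, if (G ω).Reachable i u then w u else 0) ∂μ) *
      (∫ ω, (∑ u, if (G ω).Reachable j u then w u else 0) ∂μ) := by
  intro i j hij
  classical
  set F : Ω → Stmt10Aux.EI n → Bool := fun ω p => decide ((G ω).Adj p.1.1 p.1.2) with hFdef
  have hGF : ∀ ω, G ω = Stmt10Aux.fullG (F ω) := by
    intro ω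
    ext a b
    unfold Stmt10Aux.fullG Stmt10Aux.Dg
    simp only [hFdef, decide_eq_true_eq]
    constructor
    · intro h
      rcases lt_trichotomy a b with hab | hab | hab
      · exact Or.inl ⟨hab, trivial, h⟩
      · exact absurd hab h.ne
      · exact Or.inr ⟨hab, trivial, h.symm⟩
    · rintro (⟨h1,-,h3⟩|⟨h1,-,h3⟩)
      · exact h3
      · exact h3.symm
  have hF : Measurable F := by
    rw [measurable_pi_iff]
    intro p
    have : (fun ω => F ω p) = fun ω => if (G ω).Adj p.1.1 p.1.2 then true else false := by
      funext ω
      simp [hFdef]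
    rw [this]
    exact Measurable.ite (measurableSet_setOf.mpr (hmeas p.1.1 p.1.2)) measurable_const
      measurable_const
  have := Stmt10Aux.main_aux μ n w (fun u => (hw u).le) F hF hindep i j hij
  simp only [hGF]
  simpa [Stmt10Aux.Wf] using this
end
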